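/- Let m be a negative square-free integer, K = ℚ(√m) with nontrivial automorphism σ and ring of integers O_K, and fix a field embedding φ : K → ℂ. Let b ∈ K \ ℚ and write b = b_n / b_d with b_n, b_d ∈ O_K and b_d ≠ 0. Then for all u, v ∈ O_K with (u, v) ≠ (0, 0), one has |φ(u·σ(u) − b·v·σ(v))|² ≥ 1 / |φ(b_d)|². In particular, the code obtained from the nonassociative quaternion algebra Cay(K,b) by restricting entries to O_K has non-vanishing determinant. -/

import Mathlib

open NumberField

/-- Every element of a degree-2 extension of `ℚ` containing an element `s`
outside `ℚ` is of the form `p + q * s`. -/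
theorem cay_aux_repr {K : Type*} [Field K] [NumberField K]
    (hdim : Module.finrank ℚ K = 2) (s : K)
    (hsnot : s ∉ Set.range (algebraMap ℚ K)) :
    ∀ x : K, ∃ p q : ℚ, x = (p : K) + (q : K) * s := by
  have hli : LinearIndependent ℚ ![(1 : K), s] := by
    rw [LinearIndependent.pair_iff]
    intro a c h
    have h' : (a : K) + (c : K) * s = 0 := by
      simpa [Algebra.smul_def, eq_ratCast] using h
    by_cases hc : c = 0
    · subst hc
      refine ⟨?_, rfl⟩
      have ha : (a : K) = 0 := by simpa using h'
      exact_mod_cast ha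
    · exfalso
      apply hsnot
      refine ⟨-a / c, ?_⟩
      have hcK : (c : K) ≠ 0 := by exact_mod_cast hc
      rw [eq_ratCast]
      push_cast
      rw [div_eq_iff hcK]
      linear_combination -h'
  have hspan : Submodule.span ℚ {(1 : K), s} = ⊤ := by
    apply Submodule.eq_top_of_finrank_eq
    have hfr := finrank_span_eq_card (R := ℚ) hli
    have hrange : Set.range ![(1 : K), s] = {(1 : K), s} := by
      simp [Matrix.range_cons, Matrix.range_empty, Set.pair_comm]
    rw [hrange] at hfr
    rw [hfr, hdim]; rfl
  intro x
  have hx : x ∈ Submodule.span ℚ {(1 : K), s} := by rw [hspan]; trivial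
  obtain ⟨p, q, hpq⟩ := Submodule.mem_span_pair.mp hx
  exact ⟨p, q, by rw [← hpq]; simp [Algebra.smul_def, eq_ratCast]⟩

theorem cay_code_nvd_imaginary_quadratic {K : Type*} [Field K] [NumberField K]
    (hdim : Module.finrank ℚ K = 2)
    (m : ℤ) (hm : m < 0) (hmsf : Squarefree m)
    (s : K) (hs : s ^ 2 = (m : K))
    (σ : K ≃ₐ[ℚ] K) (hσ : σ ≠ AlgEquiv.refl)
    (b : K) (hb : b ∉ Set.range (algebraMap ℚ K))
    (b_n b_d : 𝓞 K) (hbd : (b_d : K) ≠ 0) (hbe : (b_n : K) = b * (b_d : K))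
    (φ : K →+* ℂ) :
    ∀ u v : 𝓞 K, (u, v) ≠ (0, 0) →
      1 / ‖φ (b_d : K)‖ ^ 2 ≤
        ‖φ ((u : K) * σ (u : K) - b * ((v : K) * σ (v : K)))‖ ^ 2 := by
  -- basic facts about `s`
  have hm0 : (m : K) ≠ 0 := by
    exact_mod_cast fun h => absurd (by exact_mod_cast h : m = 0) (by omega)
  have hs0 : s ≠ 0 := by intro h; rw [h] at hs; simp at hs; exact hm0 hs.symm
  have hσ0 : ∀ x : K, σ x = 0 → x = 0 := by
    intro x hx
    exact σ.injective (by rw [hx, map_zero])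
  have hsnot : s ∉ Set.range (algebraMap ℚ K) := by
    rintro ⟨q, rfl⟩
    rw [eq_ratCast] at hs
    have h1 : ((q ^ 2 : ℚ) : K) = ((m : ℚ) : K) := by push_cast; push_cast at hs; linear_combination hs
    have h2 : q ^ 2 = (m : ℚ) := by exact_mod_cast h1
    have h3 : (0 : ℚ) ≤ q ^ 2 := sq_nonneg q
    rw [h2] at h3
    exact absurd (by exact_mod_cast h3 : (0:ℤ) ≤ m) (by omega)
  have repr := cay_aux_repr hdim s hsnot
  -- σ s = -s
  have hσs : σ s = -s := by
    have h2 : (σ s) ^ 2 = s ^ 2 := by rw [hs, ← map_pow, hs]; simp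
    rcases sq_eq_sq_iff_eq_or_eq_neg.mp h2 with h | h
    · exfalso
      apply hσ
      ext x
      obtain ⟨p, q, rfl⟩ := repr x
      simp [map_add, map_mul, h]
    · exact h
  -- σ-fixed elements are rational
  have hfix : ∀ x : K, σ x = x → ∃ p : ℚ, x = (p : K) := by
    intro x hx
    obtain ⟨p, q, rfl⟩ := repr x
    refine ⟨p, ?_⟩
    have h1 : (p : K) + (q : K) * (-s) = (p : K) + (q : K) * s := by
      rw [← hσs]; simpa [map_add, map_mul] using hx
    have hq : (q : K) = 0 := by
      have h2 : (2 : K) * ((q : K) * s) = 0 := by linear_combination -h1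
      rcases mul_eq_zero.mp h2 with h | h
      · exact absurd h two_ne_zero
      · rcases mul_eq_zero.mp h with h | h
        · exact h
        · exact absurd h hs0
    rw [hq]; ring
  -- σ is an involution
  have hσσ : ∀ x : K, σ (σ x) = x := by
    intro x
    obtain ⟨p, q, rfl⟩ := repr x
    simp [map_add, map_mul, hσs]
  -- conjugation on ℂ corresponds to σ
  have hconj : ∀ x : K, (starRingEnd ℂ) (φ x) = φ (σ x) := by
    have hφs : (starRingEnd ℂ) (φ s) = -φ s := by
      have hz2 : (φ s) ^ 2 = ((m : ℝ) : ℂ) := by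
        rw [← map_pow, hs]; push_cast; simp [map_intCast]
      have h2 : ((starRingEnd ℂ) (φ s)) ^ 2 = (φ s) ^ 2 := by
        rw [← map_pow, hz2]; simp [Complex.conj_ofReal]
      rcases sq_eq_sq_iff_eq_or_eq_neg.mp h2 with h | h
      · exfalso
        have him : (φ s).im = 0 := Complex.conj_eq_iff_im.mp h
        have hre : (φ s) = ((φ s).re : ℂ) := by
          rw [Complex.ext_iff]; simp [him]
        rw [hre] at hz2
        have h4 : ((φ s).re ^ 2 : ℝ) = (m : ℝ) := by exact_mod_cast hz2
        have h0 : (0 : ℝ) ≤ (φ s).re ^ 2 := sq_nonneg _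
        rw [h4] at h0
        exact absurd (by exact_mod_cast h0 : (0:ℤ) ≤ m) (by omega)
      · exact h
    intro x
    obtain ⟨p, q, rfl⟩ := repr x
    simp only [map_add, map_mul, map_ratCast, map_neg, hσs, hφs]
  -- main argument
  intro u v huv
  set Nu : K := (u : K) * σ (u : K) with hNu
  set Nv : K := (v : K) * σ (v : K) with hNv
  set d : K := Nu - b * Nv with hd
  -- d ≠ 0
  have hd0 : d ≠ 0 := by
    intro h0
    have heq : Nu = b * Nv := by linear_combination h0
    by_cases hv : (v : K) = 0
    · have hu : (u : K) ≠ 0 := by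
        intro hu0
        apply huv
        have h1 : u = 0 := RingOfIntegers.ext_iff.mpr hu0
        have h2 : v = 0 := RingOfIntegers.ext_iff.mpr hv
        rw [h1, h2]
      have hNu0 : Nu = 0 := by rw [heq, hNv, hv]; ring
      rcases mul_eq_zero.mp hNu0 with h | h
      · exact hu h
      · exact hu (hσ0 _ h)
    · have hvσ : σ (v : K) ≠ 0 := fun h => hv (hσ0 _ h)
      have hNv0 : Nv ≠ 0 := mul_ne_zero hv hvσ
      obtain ⟨p, hp⟩ := hfix Nu (by rw [hNu, map_mul, hσσ]; ring)
      obtain ⟨q, hq⟩ := hfix Nv (by rw [hNv, map_mul, hσσ]; ring)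
      have hqK : ((q : ℚ) : K) ≠ 0 := by rw [← hq]; exact hNv0
      apply hb
      refine ⟨p / q, ?_⟩
      rw [eq_ratCast]
      push_cast
      rw [div_eq_iff hqK]
      rw [← hp, ← hq, heq]
  -- the algebraic integer W = b_d * d
  have hintu : IsIntegral ℤ (σ (u : K)) :=
    (RingOfIntegers.isIntegral_coe u).map (σ.toAlgHom.restrictScalars ℤ)
  have hintv : IsIntegral ℤ (σ (v : K)) :=
    (RingOfIntegers.isIntegral_coe v).map (σ.toAlgHom.restrictScalars ℤ)
  set W : 𝓞 K := b_d * u * ⟨σ (u : K), hintu⟩ - b_n * v * ⟨σ (v : K), hintv⟩ with hWdef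
  have hW : (W : K) = (b_d : K) * d := by
    rw [hWdef, hd, hNu, hNv]
    have e : ((b_d * u * ⟨σ (u : K), hintu⟩ - b_n * v * ⟨σ (v : K), hintv⟩ : 𝓞 K) : K)
        = (b_d : K) * u * σ (u : K) - (b_n : K) * v * σ (v : K) := rfl
    rw [e, hbe]; ring
  have hW0 : (W : K) ≠ 0 := by rw [hW]; exact mul_ne_zero hbd hd0
  -- W * σ W is a nonzero rational integer
  obtain ⟨r, hr⟩ := hfix ((W : K) * σ (W : K)) (by rw [map_mul, hσσ]; ring)
  have hrint : IsIntegral ℤ ((W : K) * σ (W : K)) :=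
    (RingOfIntegers.isIntegral_coe W).mul
      ((RingOfIntegers.isIntegral_coe W).map (σ.toAlgHom.restrictScalars ℤ))
  have hrint' : IsIntegral ℤ r := by
    rw [hr, show ((r : ℚ) : K) = algebraMap ℚ K r from (eq_ratCast _ _).symm] at hrint
    exact (isIntegral_algebraMap_iff (algebraMap ℚ K).injective).mp hrint
  obtain ⟨n, hn⟩ := IsIntegrallyClosed.isIntegral_iff.mp hrint'
  rw [eq_intCast] at hn
  have hr0 : r ≠ 0 := by
    intro h
    rw [h] at hr
    simp only [Rat.cast_zero] at hr
    rcases mul_eq_zero.mp hr with h' | h'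
    · exact hW0 h'
    · exact hW0 (hσ0 _ h')
  -- |φ W|² = r ≥ 1
  have hnormW : (‖φ (W : K)‖)^2 = (r : ℝ) := by
    have h1 : φ (W : K) * (starRingEnd ℂ) (φ (W : K)) = ((r : ℝ) : ℂ) := by
      rw [hconj, ← map_mul, hr]
      push_cast
      simp [map_ratCast]
    rw [Complex.mul_conj] at h1
    have h2 := Complex.ofReal_inj.mp h1
    rw [← h2, Complex.sq_norm]
  have hr1 : (1 : ℝ) ≤ (r : ℝ) := by
    have hrnn : (0 : ℝ) ≤ (r : ℝ) := by rw [← hnormW]; positivity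
    have hn0 : n ≠ 0 := by rintro rfl; apply hr0; rw [← hn]; simp
    have hn1 : (1 : ℤ) ≤ n := by
      rcases lt_or_ge n 0 with h | h
      · exfalso
        have hneg : (r : ℝ) < 0 := by
          rw [← hn]; push_cast
          exact_mod_cast (by exact_mod_cast h : (n : ℝ) < 0)
        linarith
      · omega
    rw [← hn]; push_cast; exact_mod_cast hn1
  -- conclude
  have hφbd : φ (b_d : K) ≠ 0 := fun h => hbd (φ.injective (by rw [h, map_zero]))
  have hbdpos : (0 : ℝ) < ‖φ (b_d : K)‖ ^ 2 :=
    pow_pos (norm_pos_iff.mpr hφbd) 2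
  rw [div_le_iff₀ hbdpos]
  have hmul : ‖φ d‖ ^ 2 * ‖φ (b_d : K)‖ ^ 2
      = ‖φ (W : K)‖ ^ 2 := by
    rw [hW, map_mul, norm_mul]; ring
  rw [hmul, hnormW]
  exact hr1
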